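/- Let P_1, P_2 be polynomials over ℕ in ξ_2,...,ξ_n, let P_1'', P_2'' be their homogenizations to common degree d via the new variable ξ_1 (each monomial t_i of degree d_i multiplied by ξ_1^{d−d_i}, d > all d_i), and let c be a natural number ≥ every coefficient of P_1. Set P_s = P_1'' and P_b = c·P_2''. Then the following are equivalent: (a) there exists a valuation Ξ: {ξ_2,...,ξ_n}→ℕ with P_1(Ξ) > P_2(Ξ); (b) there exists a valuation Ξ': {ξ_1,...,ξ_n}→ℕ with c·P_s(Ξ') > Ξ'(ξ_1)^d · P_b(Ξ'). -/

import Mathlib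

open MvPolynomial

/-- The homogenization of a polynomial `P` in variables `ξ_2, …, ξ_{n+1}` (indexed by
`Fin n`) to degree `d` via a fresh variable `ξ_1` (index `0` in `Fin (n+1)`): every
monomial `t_i` of degree `d_i` is multiplied by `ξ_1 ^ (d - d_i)`. -/
noncomputable def homog (n d : ℕ) (P : MvPolynomial (Fin n) ℕ) :
    MvPolynomial (Fin (n + 1)) ℕ :=
  ∑ m ∈ P.support,
    (X 0) ^ (d - m.sum fun _ e => e) *
      monomial (m.mapDomain Fin.succ) (P.coeff m)

lemma eval_homog (n d : ℕ) (P : MvPolynomial (Fin n) ℕ) (Ξ' : Fin (n+1) → ℕ) :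
    eval Ξ' (homog n d P) =
      ∑ m ∈ P.support, (Ξ' 0) ^ (d - m.sum fun _ e => e) *
        eval (Ξ' ∘ Fin.succ) (monomial m (P.coeff m)) := by
  unfold homog
  rw [map_sum]
  refine Finset.sum_congr rfl fun m _ => ?_
  rw [map_mul, map_pow, eval_X, eval_monomial, eval_monomial]
  congr 1
  rw [Finsupp.prod_mapDomain_index_inj (Fin.succ_injective n)]
  rfl

lemma eval_as_sum (n : ℕ) (P : MvPolynomial (Fin n) ℕ) (Ξ : Fin n → ℕ) :
    eval Ξ P = ∑ m ∈ P.support, eval Ξ (monomial m (P.coeff m)) := by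
  conv_lhs => rw [← P.support_sum_monomial_coeff]
  rw [map_sum]

/-- Let `P₁, P₂` be polynomials over `ℕ` in `ξ_2, …, ξ_{n+1}`, let `P₁'', P₂''` be
their homogenizations to common degree `d` via the fresh variable `ξ_1`
(`d` exceeding the degree of every monomial), and let `c` be at least every
coefficient of `P₁`.  With `P_s = P₁''` and `P_b = c·P₂''`, the following are
equivalent: (a) some valuation `Ξ` satisfies `P₁(Ξ) > P₂(Ξ)`; (b) some valuation
`Ξ'` satisfies `c·P_s(Ξ') > Ξ'(ξ_1)^d · P_b(Ξ')`. -/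
theorem stmt14 (n d c : ℕ) (P₁ P₂ : MvPolynomial (Fin n) ℕ)
    (hd₁ : ∀ m ∈ P₁.support, (m.sum fun _ e => e) < d)
    (hd₂ : ∀ m ∈ P₂.support, (m.sum fun _ e => e) < d)
    (hc : ∀ m ∈ P₁.support, P₁.coeff m ≤ c) :
    (∃ Ξ : Fin n → ℕ, MvPolynomial.eval Ξ P₂ < MvPolynomial.eval Ξ P₁) ↔
    (∃ Ξ' : Fin (n + 1) → ℕ,
      (Ξ' 0) ^ d * MvPolynomial.eval Ξ' (C c * homog n d P₂) <
        c * MvPolynomial.eval Ξ' (homog n d P₁)) := by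
  constructor
  · rintro ⟨Ξ, hΞ⟩
    refine ⟨Fin.cons 1 Ξ, ?_⟩
    have hc1 : 1 ≤ c := by
      rcases Nat.eq_zero_or_pos c with rfl | h
      · have : P₁ = 0 := by
          ext m
          rcases em (m ∈ P₁.support) with hm | hm
          · simpa using Nat.le_zero.mp (hc m hm)
          · simpa using notMem_support_iff.mp hm
        rw [this] at hΞ; simp at hΞ
      · exact h
    have hcons : (Fin.cons 1 Ξ : Fin (n+1) → ℕ) ∘ Fin.succ = Ξ := by
      funext i; simp
    have key : ∀ P : MvPolynomial (Fin n) ℕ,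
        eval (Fin.cons 1 Ξ : Fin (n+1) → ℕ) (homog n d P) = eval Ξ P := by
      intro P
      rw [eval_homog, eval_as_sum n P Ξ, hcons]
      refine Finset.sum_congr rfl fun m _ => ?_
      simp
    rw [map_mul, eval_C, key, key]
    simp only [Fin.cons_zero, one_pow, one_mul]
    exact Nat.mul_lt_mul_of_pos_left hΞ hc1
  · rintro ⟨Ξ', h⟩
    by_contra hna
    push_neg at hna
    set a := Ξ' 0 with ha
    set Ξ := Ξ' ∘ Fin.succ with hΞdef
    rw [map_mul, eval_C] at h
    have contra : c * eval Ξ' (homog n d P₁) ≤ a ^ d * (c * eval Ξ' (homog n d P₂)) := by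
      rcases Nat.eq_zero_or_pos a with ha0 | ha1
      · have : eval Ξ' (homog n d P₁) = 0 := by
          rw [eval_homog]
          refine Finset.sum_eq_zero fun m hm => ?_
          rw [← ha, ha0, zero_pow (Nat.sub_ne_zero_of_lt (hd₁ m hm)), zero_mul]
        rw [this, mul_zero]
        exact Nat.zero_le _
      · have h1 : eval Ξ' (homog n d P₁) ≤ a ^ d * eval Ξ P₁ := by
          rw [eval_homog, eval_as_sum n P₁ Ξ, Finset.mul_sum]
          exact Finset.sum_le_sum fun m hm =>
            Nat.mul_le_mul_right _ (Nat.pow_le_pow_right ha1 (Nat.sub_le d _))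
        have h2 : eval Ξ P₂ ≤ eval Ξ' (homog n d P₂) := by
          rw [eval_homog, eval_as_sum n P₂ Ξ]
          exact Finset.sum_le_sum fun m hm =>
            Nat.le_mul_of_pos_left _ (Nat.pow_pos ha1)
        calc c * eval Ξ' (homog n d P₁)
            ≤ c * (a ^ d * eval Ξ P₁) := Nat.mul_le_mul_left c h1
          _ ≤ c * (a ^ d * eval Ξ P₂) := Nat.mul_le_mul_left c (Nat.mul_le_mul_left _ (hna Ξ))
          _ ≤ c * (a ^ d * eval Ξ' (homog n d P₂)) := Nat.mul_le_mul_left c (Nat.mul_le_mul_left _ h2)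
          _ = a ^ d * (c * eval Ξ' (homog n d P₂)) := by ring
    exact absurd h (not_lt.mpr contra)
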